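/- arXiv:1608.00622 — 2 statements merged into one kernel-verified Lean document; each statement's English description precedes it below -/
import Mathlib

section
/- With $T$ as in the policy-iteration setting ($T(v)_i = \min_{a\in U_i}\{c_i(a)+\gamma\sum_j e_{ij}(a)v_j\}$, $U_i$ finite, $E(a)$ row-stochastic, $\gamma\in(0,1)$), define modified policy iteration: given $v_k$ with $T(v_k)\le v_k$, choose a minimizing policy $a^{(k)}$ for $v_k$ and set $v_{k+1} = L_{a^{(k)}}^{N}(v_k)$, where $L_a(v) = c(a)+\gamma E(a)v$ and $N\ge1$ is fixed. Then the sequence $(v_k)$ is monotone nonincreasing and converges to the unique fixed point $v^*$ of $T$; moreover for all $k$, $T^k(v_0) \ge v_k \ge v^*$. -/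
/-- Modified policy iteration: starting from a super-solution `v₀`, the MPI
sequence is monotone nonincreasing, converges to the unique fixed point `v*`,
and is squeezed between value iteration and `v*`. -/
theorem stmt4 {n : ℕ} (U : Fin n → Type*)
    [∀ i, Fintype (U i)] [∀ i, Nonempty (U i)]
    (γ : ℝ) (hγ0 : 0 < γ) (hγ1 : γ < 1)
    (c : ∀ i, U i → ℝ) (e : ∀ i, U i → Fin n → ℝ)
    (he0 : ∀ i a j, 0 ≤ e i a j) (he1 : ∀ i a, ∑ j, e i a j = 1)
    (T : (Fin n → ℝ) → Fin n → ℝ)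
    (hT : ∀ v i, T v i = ⨅ a : U i, (c i a + γ * ∑ j, e i a j * v j))
    (L : (∀ i, U i) → (Fin n → ℝ) → Fin n → ℝ)
    (hL : ∀ p w i, L p w i = c i (p i) + γ * ∑ j, e i (p i) j * w j)
    (N : ℕ) (hN : 1 ≤ N)
    (v : ℕ → Fin n → ℝ) (a : ℕ → ∀ i, U i)
    (hopt : ∀ k, L (a k) (v k) = T (v k))
    (hstep : ∀ k, v (k+1) = (L (a k))^[N] (v k))
    (h0 : T (v 0) ≤ v 0)
    (vstar : Fin n → ℝ) (hfix : T vstar = vstar) :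
    (∀ k, v (k+1) ≤ v k) ∧
    Filter.Tendsto v Filter.atTop (nhds vstar) ∧
    (∀ k, vstar ≤ v k ∧ v k ≤ T^[k] (v 0)) := by
  -- trivial case n = 0
  rcases Nat.eq_zero_or_pos n with hn | hn
  · subst hn
    have hsub : ∀ f g : Fin 0 → ℝ, f = g := fun f g => funext fun i => i.elim0
    have hle : ∀ f g : Fin 0 → ℝ, f ≤ g := fun f g i => i.elim0
    refine ⟨fun k => hle _ _, ?_, fun k => ⟨hle _ _, hle _ _⟩⟩
    have : v = fun _ => vstar := funext fun k => hsub _ _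
    rw [this]; exact tendsto_const_nhds
  haveI : Nonempty (Fin n) := ⟨⟨0, hn⟩⟩
  -- basic facts
  have hbdd : ∀ (i : Fin n) (f : U i → ℝ), BddBelow (Set.range f) :=
    fun i f => (Set.finite_range f).bddBelow
  have hsum_mono : ∀ (i : Fin n) (b : U i) (w w' : Fin n → ℝ), w ≤ w' →
      ∑ j, e i b j * w j ≤ ∑ j, e i b j * w' j := by
    intro i b w w' h
    exact Finset.sum_le_sum fun j _ => mul_le_mul_of_nonneg_left (h j) (he0 i b j)
  have hLmono : ∀ p (w w' : Fin n → ℝ), w ≤ w' → L p w ≤ L p w' := by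
    intro p w w' h i
    rw [hL, hL]
    have := hsum_mono i (p i) w w' h
    nlinarith
  have hTmono : ∀ (w w' : Fin n → ℝ), w ≤ w' → T w ≤ T w' := by
    intro w w' h i
    rw [hT, hT]
    refine ciInf_mono (hbdd i _) fun b => ?_
    have := hsum_mono i b w w' h
    nlinarith
  have hTleL : ∀ p (w : Fin n → ℝ), T w ≤ L p w := by
    intro p w i
    rw [hT, hL]
    exact ciInf_le (hbdd i _) (p i)
  -- one-sided contraction
  have hcontr : ∀ (w w' : Fin n → ℝ) (M : ℝ), (∀ j, w j ≤ w' j + M) →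
      ∀ i, T w i ≤ T w' i + γ * M := by
    intro w w' M h i
    obtain ⟨b, hb⟩ := Finite.exists_min (fun b : U i => c i b + γ * ∑ j, e i b j * w' j)
    have hmin : T w' i = c i b + γ * ∑ j, e i b j * w' j := by
      rw [hT]
      exact le_antisymm (ciInf_le (hbdd i _) b) (le_ciInf hb)
    have h1 : T w i ≤ c i b + γ * ∑ j, e i b j * w j := by
      rw [hT]; exact ciInf_le (hbdd i _) b
    have h2 : ∑ j, e i b j * w j ≤ (∑ j, e i b j * w' j) + M := by
      calc ∑ j, e i b j * w j ≤ ∑ j, e i b j * (w' j + M) :=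
            Finset.sum_le_sum fun j _ =>
              mul_le_mul_of_nonneg_left (h j) (he0 i b j)
        _ = (∑ j, e i b j * w' j) + (∑ j, e i b j) * M := by
            rw [Finset.sum_mul]; rw [← Finset.sum_add_distrib]
            exact Finset.sum_congr rfl fun j _ => by ring
        _ = (∑ j, e i b j * w' j) + M := by rw [he1]; ring
    rw [hmin]
    nlinarith
  -- any super-solution dominates vstar
  have hkey : ∀ w : Fin n → ℝ, T w ≤ w → vstar ≤ w := by
    intro w hw
    obtain ⟨i0, hi0⟩ := Finite.exists_max (fun i => vstar i - w i)
    set M := vstar i0 - w i0 with hM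
    have hM0 : M ≤ 0 := by
      have h1 : ∀ j, vstar j ≤ w j + M := fun j => by
        have := hi0 j; simp only [hM] at this ⊢; linarith
      have h2 := hcontr vstar w M h1 i0
      rw [hfix] at h2
      have h3 := hw i0
      nlinarith
    intro i
    have := hi0 i
    simp only [hM] at this
    linarith
  -- decreasing iterates of L
  have hiter : ∀ p (w : Fin n → ℝ), L p w ≤ w → ∀ m, L p ((L p)^[m] w) ≤ (L p)^[m] w := by
    intro p w hw m
    induction m with
    | zero => simpa using hw
    | succ m ih =>
      rw [Function.iterate_succ_apply']
      exact hLmono p _ _ ih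
  have hiterle : ∀ p (w : Fin n → ℝ), L p w ≤ w → ∀ m, (L p)^[m] w ≤ w := by
    intro p w hw m
    induction m with
    | zero => simp
    | succ m ih =>
      rw [Function.iterate_succ_apply']
      exact le_trans (hiter p w hw m) ih
  -- invariant T (v k) ≤ v k
  have hinv : ∀ k, T (v k) ≤ v k := by
    intro k
    induction k with
    | zero => exact h0
    | succ k ih =>
      have hLle : L (a k) (v k) ≤ v k := by rw [hopt]; exact ih
      rw [hstep k]
      exact le_trans (hTleL (a k) _) (hiter (a k) (v k) hLle N)
  have hLle : ∀ k, L (a k) (v k) ≤ v k := fun k => by rw [hopt]; exact hinv k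
  have hdec : ∀ k, v (k+1) ≤ v k := by
    intro k
    rw [hstep k]
    exact hiterle (a k) (v k) (hLle k) N
  -- v (k+1) ≤ T (v k)
  have hstepT : ∀ k, v (k+1) ≤ T (v k) := by
    intro k
    rw [hstep k, ← hopt k]
    obtain ⟨m, rfl⟩ := Nat.exists_eq_add_of_le hN
    rw [add_comm, Function.iterate_add_apply, Function.iterate_one]
    exact hiterle (a k) _ (hLmono (a k) _ _ (hLle k)) m
  have hub : ∀ k, v k ≤ T^[k] (v 0) := by
    intro k
    induction k with
    | zero => simp
    | succ k ih =>
      rw [Function.iterate_succ_apply']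
      exact le_trans (hstepT k) (hTmono _ _ ih)
  have hlb : ∀ k, vstar ≤ v k := fun k => hkey (v k) (hinv k)
  -- geometric bound on value iteration
  obtain ⟨i0, hi0⟩ := Finite.exists_max (fun i => v 0 i - vstar i)
  set M0 := v 0 i0 - vstar i0 with hM0
  have hM0nn : 0 ≤ M0 := by have := hlb 0 i0; simp only [hM0]; linarith
  have hTk : ∀ k j, T^[k] (v 0) j ≤ vstar j + γ ^ k * M0 := by
    intro k
    induction k with
    | zero =>
      intro j
      have := hi0 j
      simp only [hM0] at this
      simpa using by linarith
    | succ k ih =>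
      intro j
      rw [Function.iterate_succ_apply']
      have := hcontr (T^[k] (v 0)) vstar (γ ^ k * M0) ih j
      rw [hfix] at this
      calc T (T^[k] (v 0)) j ≤ vstar j + γ * (γ ^ k * M0) := this
        _ = vstar j + γ ^ (k+1) * M0 := by ring
  -- convergence
  have htend : Filter.Tendsto v Filter.atTop (nhds vstar) := by
    rw [tendsto_pi_nhds]
    intro i
    have hbound : Filter.Tendsto (fun k : ℕ => vstar i + γ ^ k * M0)
        Filter.atTop (nhds (vstar i)) := by
      have h1 : Filter.Tendsto (fun k : ℕ => γ ^ k) Filter.atTop (nhds 0) :=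
        tendsto_pow_atTop_nhds_zero_of_lt_one hγ0.le hγ1
      have := Filter.Tendsto.add (tendsto_const_nhds (x := vstar i))
        ((h1.mul_const M0))
      simpa using this
    refine tendsto_of_tendsto_of_tendsto_of_le_of_le tendsto_const_nhds hbound
      (fun k => hlb k i) (fun k => le_trans (hub k i) (hTk k i))
  exact ⟨hdec, htend, fun k => ⟨hlb k, hub k⟩⟩
end

section
/- Let $v^*$ solve the fixed point equation $v = \min_{(\alpha,s)}\{[D(s) + \gamma E(\alpha,s)]v - c(\alpha,s)\}$ componentwise, where the minimum is over a finite set of policies, $\gamma\in(0,1)$, and for each policy the matrix $D(s) + \gamma E(\alpha,s)$ is (entrywise) nonnegative with row sums at most $\max(1,\gamma) = 1$, and at each row either $D(s)$ contributes a single entry equal to 1 and $E$ contributes zero, or $D(s)$ contributes zero and $E(\alpha,s)$ has row sum 1. Assume additionally that for the rows where $D(s)$ is active (pure switching), the cost $-c$ satisfies $-c_i \ge \Delta_0 > 0$ (strictly positive switching cost), and that under any policy the number of consecutive pure-switching rows reachable before hitting a $\gamma$-discounted row is bounded by $m-1$. Then the fixed point $v^*$ is unique. -/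
open Matrix

/-- Uniqueness of the fixed point of the hybrid semi-Lagrangian scheme:
rows corresponding to switches (via the 0-1 partial permutation `D`) carry no
discount, but switching costs are strictly positive and no policy allows `m`
consecutive switches, so the fixed point is unique. -/
theorem stmt14 {n m : ℕ} {P : Type*} [Fintype P] [Nonempty P]
    (D E : P → Matrix (Fin n) (Fin n) ℝ)
    (c : P → Fin n → ℝ) (γ Δ0 : ℝ)
    (hγ0 : 0 < γ) (hγ1 : γ < 1) (hΔ0 : 0 < Δ0)
    (hD0 : ∀ p i j, 0 ≤ D p i j) (hE0 : ∀ p i j, 0 ≤ E p i j)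
    (hrow : ∀ p i,
      (∃ j, D p i j = 1 ∧ (∀ j', j' ≠ j → D p i j' = 0) ∧ ∀ j', E p i j' = 0) ∨
      ((∀ j, D p i j = 0) ∧ ∑ j, E p i j = 1))
    (hcost : ∀ p i, ¬ (∀ j, D p i j = 0) → Δ0 ≤ -(c p i))
    (hchain : ∀ p : P, ∀ i : ℕ → Fin n, ¬ (∀ t < m, D p (i t) (i (t+1)) = 1))
    (T : (Fin n → ℝ) → Fin n → ℝ)
    (hT : ∀ v i, T v i = ⨅ p, (((D p + γ • E p) *ᵥ v) i - c p i)) :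
    ∀ u w : Fin n → ℝ, T u = u → T w = w → u = w := by

  suffices key : ∀ u w : Fin n → ℝ, T u = u → T w = w → ∀ i, u i ≤ w i by
    intro u w hu hw
    funext i
    exact le_antisymm (key u w hu hw i) (key w u hw hu i)
  intro u w hu hw i0
  by_contra hlt
  push_neg at hlt
  set d : Fin n → ℝ := fun i => u i - w i with hd
  obtain ⟨imax, -, hmax⟩ := Finset.exists_max_image Finset.univ d ⟨i0, Finset.mem_univ i0⟩
  set M := d imax with hM
  have hmax' : ∀ i, d i ≤ M := fun i => hmax i (Finset.mem_univ i)
  have hMpos : 0 < M := lt_of_lt_of_le (by simp [hd, sub_pos.2 hlt]) (hmax' i0)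
  have claim : ∀ i : Fin n, d i = M → ∃ j, d j = M ∧ w j + Δ0 ≤ w i := by
    intro i hi
    obtain ⟨p, hp⟩ := Finite.exists_min (fun p : P => ((D p + γ • E p) *ᵥ w) i - c p i)
    have hTw : T w i = ((D p + γ • E p) *ᵥ w) i - c p i := by
      rw [hT w i]
      exact le_antisymm (ciInf_le (Finite.bddBelow_range _) p) (le_ciInf hp)
    have hTu : T u i ≤ ((D p + γ • E p) *ᵥ u) i - c p i := by
      rw [hT u i]
      exact ciInf_le (Finite.bddBelow_range _) p
    have hdle : d i ≤ ∑ j, (D p i j + γ * E p i j) * d j := by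
      have hui : T u i = u i := congrFun hu i
      have hwi : T w i = w i := congrFun hw i
      have h1 : u i - w i ≤ ((D p + γ • E p) *ᵥ u) i - ((D p + γ • E p) *ᵥ w) i := by
        rw [← hui, ← hwi, hTw]
        linarith [hTu]
      have h2 : ((D p + γ • E p) *ᵥ u) i - ((D p + γ • E p) *ᵥ w) i
          = ∑ j, (D p i j + γ * E p i j) * d j := by
        simp [Matrix.mulVec, dotProduct, ← Finset.sum_sub_distrib, hd,
          mul_sub, Matrix.add_apply, Matrix.smul_apply, smul_eq_mul]
      have h3 : d i = u i - w i := rfl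
      linarith [h1, h2.le, h2.ge]
    rcases hrow p i with ⟨j, hDj, hDother, hErow⟩ | ⟨hDrow, hEsum⟩
    · have hsum : ∀ v : Fin n → ℝ, ∑ j', (D p i j' + γ * E p i j') * v j' = v j := by
        intro v
        rw [Finset.sum_eq_single_of_mem j (Finset.mem_univ j)]
        · rw [hDj, hErow]; ring
        · intro j' _ hj'
          rw [hDother j' hj', hErow]; ring
      have hdj : d j = M := by
        have h1 : M ≤ d j := by
          rw [← hi]; calc d i ≤ ∑ j', (D p i j' + γ * E p i j') * d j' := hdle
            _ = d j := hsum d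
        exact le_antisymm (hmax' j) h1
      have hwij : w j + Δ0 ≤ w i := by
        have hc : Δ0 ≤ -(c p i) := by
          apply hcost p i
          intro hall
          have := hall j
          rw [hDj] at this
          norm_num at this
        have hwval : w i = w j - c p i := by
          have hwi : T w i = w i := congrFun hw i
          rw [← hwi, hTw]
          congr 1
          have := hsum w
          simpa [Matrix.mulVec, dotProduct, Matrix.add_apply,
            Matrix.smul_apply, smul_eq_mul] using this
        linarith
      exact ⟨j, hdj, hwij⟩
    · exfalso
      have hle : ∑ j', (D p i j' + γ * E p i j') * d j' ≤ γ * M := by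
        calc ∑ j', (D p i j' + γ * E p i j') * d j'
            = ∑ j', γ * E p i j' * d j' := by
              apply Finset.sum_congr rfl
              intro j' _
              rw [hDrow j']; ring
          _ ≤ ∑ j', γ * E p i j' * M := by
              apply Finset.sum_le_sum
              intro j' _
              exact mul_le_mul_of_nonneg_left (hmax' j')
                (mul_nonneg hγ0.le (hE0 p i j'))
          _ = γ * M := by
              rw [← Finset.sum_mul]
              rw [show ∑ j', γ * E p i j' = γ * ∑ j', E p i j' by
                rw [Finset.mul_sum]]
              rw [hEsum]; ring
      have h4 := le_trans hdle hle
      rw [hi] at h4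
      nlinarith
  have step : ∀ i : {i : Fin n // d i = M},
      ∃ j : {i : Fin n // d i = M}, w j.1 + Δ0 ≤ w i.1 := by
    rintro ⟨i, hi⟩
    obtain ⟨j, h1, h2⟩ := claim i hi
    exact ⟨⟨j, h1⟩, h2⟩
  choose F hF using step
  set seq : ℕ → {i : Fin n // d i = M} := fun t => F^[t] ⟨imax, rfl⟩ with hseqdef
  have hseq : ∀ t : ℕ, w (seq t).1 ≤ w imax - t * Δ0 := by
    intro t
    induction t with
    | zero => simp [hseqdef]
    | succ t ih =>
      have hs : seq (t + 1) = F (seq t) := Function.iterate_succ_apply' F t _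
      have := hF (seq t)
      rw [hs]
      push_cast
      linarith
  obtain ⟨jmin, -, hjmin⟩ := Finset.exists_min_image Finset.univ w ⟨i0, Finset.mem_univ i0⟩
  obtain ⟨t, ht⟩ := exists_nat_gt ((w imax - w jmin) / Δ0)
  have ht' : w imax - w jmin < t * Δ0 := by
    rw [div_lt_iff₀ hΔ0] at ht
    linarith
  have := hseq t
  have := hjmin (seq t).1 (Finset.mem_univ _)
  linarith
end
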